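/- Suppose the dual variables α ∈ ℝ^n, β ∈ ℝ^m are such that the matrix T with entries T_{ij} = exp((α_i + β_j − M_{ij})/η) satisfies the marginal constraints T 1_m = a and T^T 1_n = b, i.e. T ∈ Π(a,b) = {P ∈ ℝ^{n×m} : P 1_m = a, P^T 1_n = b, P ≥ 0}. Then T is optimal for the entropic-regularized optimal transport problem: for every P ∈ Π(a,b), ⟨T, M⟩ − η·h(T) ≤ ⟨P, M⟩ − η·h(P), where h(P) = Σ_{i,j} P_{ij}(1 − log P_{ij}) and the summand is interpreted as 0 when P_{ij} = 0. -/

import Mathlib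

lemma marg_sum {n m : ℕ} (X : Matrix (Fin n) (Fin m) ℝ) (α : Fin n → ℝ) (β : Fin m → ℝ)
    (a : Fin n → ℝ) (b : Fin m → ℝ)
    (hr : ∀ i, ∑ j, X i j = a i) (hc : ∀ j, ∑ i, X i j = b j) :
    ∑ i, ∑ j, X i j * (α i + β j) = ∑ i, α i * a i + ∑ j, β j * b j := by
  have : ∑ i, ∑ j, X i j * (α i + β j)
      = ∑ i, ∑ j, X i j * α i + ∑ i, ∑ j, X i j * β j := by
    simp [mul_add, Finset.sum_add_distrib]
  rw [this]
  congr 1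
  · refine Finset.sum_congr rfl fun i _ => ?_
    rw [← Finset.sum_mul, hr i, mul_comm]
  · rw [Finset.sum_comm]
    refine Finset.sum_congr rfl fun j _ => ?_
    rw [← Finset.sum_mul, hc j, mul_comm]

/-- If the Gibbs-form matrix `T_{ij} = exp((α_i + β_j − M_{ij})/η)`
satisfies both marginal constraints, then `T` is optimal for the
entropic-regularized OT problem. (With Mathlib's convention `Real.log 0 = 0`, the
summand `P_{ij}(1 − log P_{ij})` automatically vanishes when `P_{ij} = 0`.) -/
theorem stmt16 (n m : ℕ) (hn : 1 ≤ n) (hm : 1 ≤ m)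
    (M : Matrix (Fin n) (Fin m) ℝ) (η : ℝ) (hη : 0 < η)
    (a : Fin n → ℝ) (b : Fin m → ℝ)
    (ha : ∀ i, 0 < a i) (hb : ∀ j, 0 < b j)
    (hsa : ∑ i, a i = 1) (hsb : ∑ j, b j = 1)
    (α : Fin n → ℝ) (β : Fin m → ℝ)
    (T : Matrix (Fin n) (Fin m) ℝ)
    (hT : ∀ i j, T i j = Real.exp ((α i + β j - M i j) / η))
    (hTrow : ∀ i, ∑ j, T i j = a i)
    (hTcol : ∀ j, ∑ i, T i j = b j) :
    ∀ P : Matrix (Fin n) (Fin m) ℝ,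
      (∀ i, ∑ j, P i j = a i) → (∀ j, ∑ i, P i j = b j) → (∀ i j, 0 ≤ P i j) →
      (∑ i, ∑ j, T i j * M i j) - η * (∑ i, ∑ j, T i j * (1 - Real.log (T i j))) ≤
      (∑ i, ∑ j, P i j * M i j) - η * (∑ i, ∑ j, P i j * (1 - Real.log (P i j))) := by
  intro P hProw hPcol hPpos
  have hηne : η ≠ 0 := ne_of_gt hη
  have hTpos : ∀ i j, 0 < T i j := fun i j => (hT i j) ▸ Real.exp_pos _
  have hlog : ∀ i j, Real.log (T i j) = (α i + β j - M i j) / η := by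
    intro i j; rw [hT i j, Real.log_exp]
  -- entrywise identity: M i j = (α i + β j) - η * log T i j
  have hM : ∀ i j, M i j = (α i + β j) - η * Real.log (T i j) := by
    intro i j; rw [hlog i j]; field_simp; ring
  -- total masses
  have hST : ∑ i, ∑ j, T i j = 1 := by simp [hTrow, hsa]
  have hSP : ∑ i, ∑ j, P i j = 1 := by simp [hProw, hsa]
  -- marginal sums equal
  have hmargT := marg_sum T α β a b hTrow hTcol
  have hmargP := marg_sum P α β a b hProw hPcol
  -- KL nonnegativity
  have hKL : 0 ≤ ∑ i, ∑ j, (P i j * Real.log (P i j) - P i j * Real.log (T i j)) := by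
    have hpt : ∀ i j, P i j - T i j ≤ P i j * Real.log (P i j) - P i j * Real.log (T i j) := by
      intro i j
      rcases eq_or_lt_of_le (hPpos i j) with h | h
      · simp [← h]; exact le_of_lt (hTpos i j)
      · have hx : Real.log (T i j / P i j) ≤ T i j / P i j - 1 :=
          Real.log_le_sub_one_of_pos (div_pos (hTpos i j) h)
        rw [Real.log_div (ne_of_gt (hTpos i j)) (ne_of_gt h)] at hx
        have h2 : T i j / P i j * P i j = T i j := div_mul_cancel₀ _ (ne_of_gt h)
        nlinarith [mul_le_mul_of_nonneg_right hx (le_of_lt h)]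
    calc (0:ℝ) = ∑ i, ∑ j, (P i j - T i j) := by
          simp [Finset.sum_sub_distrib, hSP, hST]
      _ ≤ _ := Finset.sum_le_sum fun i _ => Finset.sum_le_sum fun j _ => hpt i j
  -- expand sums
  have expand : ∀ X : Matrix (Fin n) (Fin m) ℝ,
      ∑ i, ∑ j, X i j * M i j
        = ∑ i, ∑ j, X i j * (α i + β j) - η * ∑ i, ∑ j, X i j * Real.log (T i j) := by
    intro X
    rw [Finset.mul_sum, ← Finset.sum_sub_distrib]
    refine Finset.sum_congr rfl fun i _ => ?_
    rw [Finset.mul_sum, ← Finset.sum_sub_distrib]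
    refine Finset.sum_congr rfl fun j _ => ?_
    rw [hM i j]; ring
  have expT := expand T
  have expP := expand P
  have ent : ∀ X : Matrix (Fin n) (Fin m) ℝ,
      ∑ i, ∑ j, X i j * (1 - Real.log (X i j))
        = ∑ i, ∑ j, X i j - ∑ i, ∑ j, X i j * Real.log (X i j) := by
    intro X
    rw [← Finset.sum_sub_distrib]
    refine Finset.sum_congr rfl fun i _ => ?_
    rw [← Finset.sum_sub_distrib]
    refine Finset.sum_congr rfl fun j _ => ?_
    ring
  rw [ent T, ent P, expT, expP, hST, hSP, hmargT, hmargP]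
  simp only [Finset.sum_sub_distrib] at hKL
  nlinarith [hKL]
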